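/- For a connected Feynman graph G and an edge subgraph γ ⊊ E_G, the restriction and contraction of s_G satisfy s_G|_γ = s_γ and s_G/_γ = s_{G/γ}, where γ carries the induced kinematics (the full kinematics of G if γ is mass-momentum spanning, trivial kinematics otherwise), and G/γ is the contraction of γ carrying the complementary kinematics. -/

import Mathlib

open scoped Classical

/-- Signed incidence vector of an (oriented) edge `e`: head minus tail, in `ℚ^V`. -/
noncomputable def bd {V E : Type*} (ends : E → V × V) (e : E) : V → ℚ :=
  fun v => (if v = (ends e).1 then 1 else 0) - (if v = (ends e).2 then 1 else 0)

/-- Rank function of the graphic matroid of the graph. -/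
noncomputable def grank {V E : Type*} [Fintype E] (ends : E → V × V) (γ : Finset E) : ℕ :=
  Module.finrank ℚ (Submodule.span ℚ (bd ends '' ↑γ))

/-- First Betti number (cycle rank) of the edge subgraph on `γ`. -/
noncomputable def cycleRank {V E : Type*} [Fintype E] (ends : E → V × V)
    (γ : Finset E) : ℤ :=
  (γ.card : ℤ) - grank ends γ

/-- One step of adjacency through an edge of `γ`. -/
def step {V E : Type*} (ends : E → V × V) (γ : Finset E) (a b : V) : Prop :=
  ∃ e ∈ γ, ends e = (a, b) ∨ ends e = (b, a)

/-- `a` and `b` lie in the same connected component of the edge subgraph `γ`. -/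
def reach {V E : Type*} (ends : E → V × V) (γ : Finset E) (a b : V) : Prop :=
  Relation.EqvGen (step ends γ) a b

/-- `γ` is mass-momentum spanning: it contains all massive edges `EM` and all external
vertices `Vext` lie in a single connected component of the edge subgraph `γ`. -/
def mmSpanning {V E : Type*} (ends : E → V × V) (EM : Finset E) (Vext : Finset V)
    (γ : Finset E) : Prop :=
  EM ⊆ γ ∧ ∀ v ∈ Vext, ∀ w ∈ Vext, reach ends γ v w

/-- The set function `s_G(γ) = 2 h¹(γ) + δ^{mm}_γ` of a Feynman graph.  (A scaleless
graph, i.e. one with `EM = ∅` and `Vext = ∅`, is passed the empty kinematics and then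
the `δ^{mm}` term is declared to vanish; this is handled at use sites.) -/
noncomputable def sG {V E : Type*} [Fintype E] (ends : E → V × V) (EM : Finset E)
    (Vext : Finset V) (γ : Finset E) : ℤ :=
  2 * cycleRank ends γ + (if mmSpanning ends EM Vext γ then 1 else 0)

/-- The vertex type of the quotient graph `G/γ`: connected components of `γ` are
contracted to single vertices. -/
def QVert {V E : Type*} (ends : E → V × V) (γ : Finset E) : Type _ :=
  Quotient (Relation.EqvGen.setoid (step ends γ))

/-- The class of a vertex in the quotient graph `G/γ`. -/
def qmk {V E : Type*} (ends : E → V × V) (γ : Finset E) (v : V) : QVert ends γ :=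
  Quotient.mk (Relation.EqvGen.setoid (step ends γ)) v

/-- The endpoint map of the quotient graph `G/γ` (on the surviving edges `E \ γ`). -/
def qends {V E : Type*} (ends : E → V × V) (γ : Finset E) (e : E) :
    QVert ends γ × QVert ends γ :=
  (qmk ends γ (ends e).1, qmk ends γ (ends e).2)

section Aux
variable {V E : Type*}

noncomputable def chiV (a : V) : V → ℚ := fun v => if v = a then 1 else 0

lemma bd_eq_chi (ends : E → V × V) (e : E) :
    bd ends e = chiV (ends e).1 - chiV (ends e).2 := rfl

lemma reach_mono {ends : E → V × V} {γ γ' : Finset E} (h : γ ⊆ γ')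
    {v w : V} (hr : reach ends γ v w) : reach ends γ' v w :=
  Relation.EqvGen.mono (r := step ends γ) (p := step ends γ')
    (fun a b (hab : step ends γ a b) => show step ends γ' a b from
      let ⟨e, he, hh⟩ := hab; ⟨e, h he, hh⟩) v w hr

lemma chi_sub_mem {ends : E → V × V} {γ : Finset E} {v w : V}
    (h : reach ends γ v w) :
    chiV v - chiV w ∈ Submodule.span ℚ (bd ends '' (γ : Set E)) := by
  induction h with
  | rel a b hab =>
      obtain ⟨e, he, h | h⟩ := hab
      · have hb : bd ends e = chiV a - chiV b := by rw [bd_eq_chi, h]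
        exact hb ▸ Submodule.subset_span ⟨e, he, rfl⟩
      · have hb : bd ends e = chiV b - chiV a := by rw [bd_eq_chi, h]
        have hmem0 : bd ends e ∈ Submodule.span ℚ (bd ends '' (γ : Set E)) :=
          Submodule.subset_span ⟨e, he, rfl⟩
        have h2 := Submodule.neg_mem _ hmem0
        rw [hb, neg_sub] at h2
        exact h2
  | refl a => simpa using Submodule.zero_mem _
  | symm a b _ ih =>
      have := Submodule.neg_mem _ ih; rwa [neg_sub] at this
  | trans a b c _ _ ih1 ih2 =>
      have := Submodule.add_mem _ ih1 ih2
      rwa [sub_add_sub_cancel] at this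

noncomputable def Smap [Fintype V] (ends : E → V × V) (γ : Finset E) :
    (V → ℚ) →ₗ[ℚ] (QVert ends γ → ℚ) where
  toFun g := fun c => ∑ v, if qmk ends γ v = c then g v else 0
  map_add' f g := by
    funext c
    simp only [Pi.add_apply]
    rw [← Finset.sum_add_distrib]
    refine Finset.sum_congr rfl fun v _ => ?_
    by_cases h : qmk ends γ v = c <;> simp [h]
  map_smul' r f := by
    funext c
    simp only [RingHom.id_apply, Pi.smul_apply, smul_eq_mul, Finset.mul_sum]
    refine Finset.sum_congr rfl fun v _ => ?_
    by_cases h : qmk ends γ v = c <;> simp [h]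

lemma Smap_chi [Fintype V] (ends : E → V × V) (γ : Finset E) (a : V) :
    Smap ends γ (chiV a) = fun c => if qmk ends γ a = c then 1 else 0 := by
  funext c
  show (∑ v, if qmk ends γ v = c then chiV a v else 0) = _
  rw [Finset.sum_eq_single a]
  · simp [chiV]
  · intro v _ hv; simp [chiV, hv]
  · intro h; exact absurd (Finset.mem_univ a) h

lemma Smap_bd [Fintype V] (ends : E → V × V) (γ : Finset E) (e : E) :
    Smap ends γ (bd ends e) = bd (qends ends γ) e := by
  rw [bd_eq_chi, map_sub, Smap_chi, Smap_chi]
  funext c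
  simp only [bd, qends, Pi.sub_apply]
  congr 1 <;> simp [eq_comm] <;> congr

lemma Smap_bd_zero [Fintype V] (ends : E → V × V) (γ : Finset E) {e : E} (he : e ∈ γ) :
    Smap ends γ (bd ends e) = 0 := by
  rw [Smap_bd]
  have hq : qmk ends γ (ends e).1 = qmk ends γ (ends e).2 :=
    Quotient.sound (Relation.EqvGen.rel _ _ ⟨e, he, Or.inl rfl⟩)
  funext c
  simp [bd, qends, hq]

lemma span_le_ker [Fintype V] (ends : E → V × V) (γ : Finset E) :
    Submodule.span ℚ (bd ends '' (γ : Set E)) ≤ LinearMap.ker (Smap ends γ) := by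
  rw [Submodule.span_le]
  rintro _ ⟨e, he, rfl⟩
  exact LinearMap.mem_ker.2 (Smap_bd_zero ends γ he)

lemma ker_le_span_aux [Fintype V] (ends : E → V × V) (γ : Finset E) :
    ∀ n (f : V → ℚ), (Finset.univ.filter (fun v => f v ≠ 0)).card ≤ n →
      Smap ends γ f = 0 → f ∈ Submodule.span ℚ (bd ends '' (γ : Set E)) := by
  intro n
  induction n with
  | zero =>
      intro f hcard _
      have hz : ∀ v, f v = 0 := by
        intro v
        by_contra hv
        have hm : v ∈ Finset.univ.filter (fun v => f v ≠ 0) := by simp [hv]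
        have := Finset.card_pos.2 ⟨v, hm⟩
        omega
      have : f = 0 := funext hz
      simp [this]
  | succ n ih =>
      intro f hcard hker
      by_cases hex : ∃ v, f v ≠ 0
      · obtain ⟨v, hv⟩ := hex
        have hsum : (∑ u, if qmk ends γ u = qmk ends γ v then f u else 0) = 0 := by
          have := congrFun hker (qmk ends γ v)
          simpa [Smap] using this
        have hw : ∃ w, w ≠ v ∧ qmk ends γ w = qmk ends γ v ∧ f w ≠ 0 := by
          by_contra hno
          push_neg at hno
          have hss : (∑ u, if qmk ends γ u = qmk ends γ v then f u else 0) = f v := by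
            rw [Finset.sum_eq_single v]
            · simp
            · intro u _ hu
              by_cases hq : qmk ends γ u = qmk ends γ v
              · simp [hq, hno u hu hq]
              · simp [hq]
            · intro h; exact absurd (Finset.mem_univ v) h
          rw [hss] at hsum; exact hv hsum
        obtain ⟨w, hwv, hq, hfw⟩ := hw
        have hreach : reach ends γ v w := Quotient.exact hq.symm
        have hmem : chiV v - chiV w ∈ Submodule.span ℚ (bd ends '' (γ : Set E)) :=
          chi_sub_mem hreach
        set g : V → ℚ := f - f v • (chiV v - chiV w) with hg
        have hgker : Smap ends γ g = 0 := by
          have h1 : Smap ends γ (chiV v - chiV w) = 0 :=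
            LinearMap.mem_ker.1 (span_le_ker ends γ hmem)
          rw [hg, map_sub, map_smul, h1, hker]; simp
        have hgv : g v = 0 := by
          simp [hg, chiV, (Ne.symm hwv : v ≠ w)]
        have hsupp : Finset.univ.filter (fun u => g u ≠ 0) ⊆
            (Finset.univ.filter (fun u => f u ≠ 0)).erase v := by
          intro u hu
          simp only [Finset.mem_filter, Finset.mem_univ, true_and] at hu
          have huv : u ≠ v := by rintro rfl; exact hu hgv
          refine Finset.mem_erase.2 ⟨huv, ?_⟩
          simp only [Finset.mem_filter, Finset.mem_univ, true_and]
          intro hfu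
          apply hu
          by_cases huw : u = w
          · exact absurd (huw ▸ hfu) hfw
          · simp [hg, chiV, huv, huw, hfu]
        have hcard' : (Finset.univ.filter (fun u => g u ≠ 0)).card ≤ n := by
          have h1 := Finset.card_le_card hsupp
          have hvmem : v ∈ Finset.univ.filter (fun u => f u ≠ 0) := by simp [hv]
          have h2 := Finset.card_erase_of_mem hvmem
          omega
        have hgmem := ih g hcard' hgker
        have hfg : f = g + f v • (chiV v - chiV w) := by
          rw [hg, sub_add_cancel]
        rw [hfg]
        exact Submodule.add_mem _ hgmem (Submodule.smul_mem _ _ hmem)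
      · push_neg at hex
        have : f = 0 := funext hex
        simp [this]

lemma ker_Smap [Fintype V] (ends : E → V × V) (γ : Finset E) :
    LinearMap.ker (Smap ends γ) = Submodule.span ℚ (bd ends '' (γ : Set E)) :=
  le_antisymm (fun f hf => ker_le_span_aux ends γ _ f le_rfl (LinearMap.mem_ker.1 hf))
    (span_le_ker ends γ)

set_option synthInstance.maxHeartbeats 1000000 in
set_option maxHeartbeats 1000000 in
lemma grank_union [Fintype V] [Fintype E] (ends : E → V × V) (γ η : Finset E) :
    grank ends (γ ∪ η) =
      Module.finrank ℚ (Submodule.span ℚ (bd (qends ends γ) '' (η : Set E)))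
        + grank ends γ := by
  set P := Submodule.span ℚ (bd ends '' ((γ ∪ η : Finset E) : Set E)) with hP
  set f := (Smap ends γ).comp P.subtype with hf
  have hrange : LinearMap.range f
      = Submodule.span ℚ (bd (qends ends γ) '' (η : Set E)) := by
    rw [hf, LinearMap.range_comp, Submodule.range_subtype, hP, Submodule.map_span,
      ← Set.image_comp]
    have himg : ((Smap ends γ) ∘ bd ends) '' (((γ ∪ η : Finset E)) : Set E)
        = bd (qends ends γ) '' (((γ ∪ η : Finset E)) : Set E) :=
      Set.image_congr fun e _ => Smap_bd ends γ e
    rw [himg, Finset.coe_union, Set.image_union, Submodule.span_union]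
    have hz : Submodule.span ℚ (bd (qends ends γ) '' (γ : Set E)) = ⊥ := by
      rw [Submodule.span_eq_bot]
      rintro _ ⟨e, he, rfl⟩
      rw [← Smap_bd]
      exact Smap_bd_zero ends γ he
    rw [hz, bot_sup_eq]
  have hker : Module.finrank ℚ (LinearMap.ker f) = grank ends γ := by
    rw [hf, LinearMap.ker_comp, ker_Smap]
    have hle : Submodule.span ℚ (bd ends '' (γ : Set E)) ≤ P := by
      rw [hP]
      exact Submodule.span_mono (Set.image_mono
        (by exact_mod_cast Finset.subset_union_left))
    have heq : Module.finrank ℚ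
        (Submodule.comap P.subtype (Submodule.span ℚ (bd ends '' (γ : Set E))))
        = Module.finrank ℚ (Submodule.span ℚ (bd ends '' (γ : Set E))) :=
      LinearEquiv.finrank_eq (Submodule.comapSubtypeEquivOfLe hle)
    rw [heq]; rfl
  have hrn := LinearMap.finrank_range_add_finrank_ker f
  rw [hrange, hker] at hrn
  have : grank ends (γ ∪ η) = Module.finrank ℚ P := rfl
  omega

lemma reach_to_quot {ends : E → V × V} {γ η : Finset E} {v w : V}
    (h : reach ends (γ ∪ η) v w) :
    Relation.EqvGen (step (qends ends γ) η) (qmk ends γ v) (qmk ends γ w) := by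
  induction h with
  | rel a b hab =>
      obtain ⟨e, he, hh⟩ := hab
      rcases Finset.mem_union.1 he with he' | he'
      · have heq : qmk ends γ a = qmk ends γ b :=
          Quotient.sound (Relation.EqvGen.rel _ _ ⟨e, he', hh⟩)
        rw [heq]
        exact Relation.EqvGen.refl _
      · refine Relation.EqvGen.rel _ _ ⟨e, he', ?_⟩
        rcases hh with hh | hh
        · left; simp [qends, hh, qmk]
        · right; simp [qends, hh, qmk]
  | refl a => exact Relation.EqvGen.refl _
  | symm a b _ ih => exact Relation.EqvGen.symm _ _ ih
  | trans a b c _ _ ih1 ih2 => exact Relation.EqvGen.trans _ _ _ ih1 ih2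

lemma quot_to_reach {ends : E → V × V} {γ η : Finset E} {a b : QVert ends γ}
    (h : Relation.EqvGen (step (qends ends γ) η) a b) :
    ∀ v w : V, qmk ends γ v = a → qmk ends γ w = b → reach ends (γ ∪ η) v w := by
  induction h with
  | rel a b hab =>
      intro v w hv hw
      obtain ⟨e, he, hh⟩ := hab
      have hstep : reach ends (γ ∪ η) (ends e).1 (ends e).2 :=
        Relation.EqvGen.rel _ _ ⟨e, Finset.mem_union_right _ he, Or.inl rfl⟩
      rcases hh with hh | hh
      · have h1 : qmk ends γ (ends e).1 = a := congrArg Prod.fst hh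
        have h2 : qmk ends γ (ends e).2 = b := congrArg Prod.snd hh
        have r1 : reach ends γ v (ends e).1 := Quotient.exact (hv.trans h1.symm)
        have r2 : reach ends γ (ends e).2 w := Quotient.exact (h2.trans hw.symm)
        exact Relation.EqvGen.trans _ _ _
          (Relation.EqvGen.trans _ _ _ (reach_mono Finset.subset_union_left r1) hstep)
          (reach_mono Finset.subset_union_left r2)
      · have h1 : qmk ends γ (ends e).1 = b := congrArg Prod.fst hh
        have h2 : qmk ends γ (ends e).2 = a := congrArg Prod.snd hh
        have r1 : reach ends γ v (ends e).2 := Quotient.exact (hv.trans h2.symm)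
        have r2 : reach ends γ (ends e).1 w := Quotient.exact (h1.trans hw.symm)
        exact Relation.EqvGen.trans _ _ _
          (Relation.EqvGen.trans _ _ _ (reach_mono Finset.subset_union_left r1)
            (Relation.EqvGen.symm _ _ hstep))
          (reach_mono Finset.subset_union_left r2)
  | refl a =>
      intro v w hv hw
      exact reach_mono Finset.subset_union_left (Quotient.exact (hv.trans hw.symm))
  | symm a b _ ih =>
      intro v w hv hw
      exact Relation.EqvGen.symm _ _ (ih w v hw hv)
  | trans a b c _ _ ih1 ih2 =>
      intro v w hv hw
      obtain ⟨u, hu⟩ := Quotient.exists_rep b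
      exact Relation.EqvGen.trans _ _ _ (ih1 v u hv hu) (ih2 u w hu hw)

end Aux

/-- For a connected Feynman graph `G` and an edge subgraph `γ ⊊ E_G`, the
restriction and contraction of `s_G` satisfy `s_G|_γ = s_γ` and `s_G/_γ = s_{G/γ}`.
Here `γ` carries the induced kinematics: the full kinematics `(EM, Vext)` of `G` if `γ` is
mass-momentum spanning, and trivial (scaleless) kinematics otherwise, so that
`s_γ(η) = 2h¹(η) + δ`, with `δ = 1` iff `γ` is m.m. and `η` is m.m.; and the quotient
`G/γ` carries the complementary kinematics: scaleless if `γ` is m.m. (so no subgraph of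
`G/γ` counts as m.m.), and the inherited kinematics (massive edges `EM \ γ`, external
vertices the images of `Vext`) otherwise. -/
theorem sG_restriction_contraction {V E : Type*} [Fintype V] [Fintype E]
    (ends : E → V × V) (EM : Finset E) (Vext : Finset V)
    (hconn : ∀ v w : V, reach ends Finset.univ v w)
    (γ : Finset E) (hγ : γ ⊂ Finset.univ) :
    (∀ η : Finset E, η ⊆ γ →
      sG ends EM Vext η =
        2 * cycleRank ends η +
          (if mmSpanning ends EM Vext γ ∧ mmSpanning ends EM Vext η then 1 else 0)) ∧
    (∀ η : Finset E, η ⊆ Finset.univ \ γ →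
      sG ends EM Vext (γ ∪ η) - sG ends EM Vext γ =
        2 * ((η.card : ℤ) -
            Module.finrank ℚ (Submodule.span ℚ (bd (qends ends γ) '' ↑η))) +
          (if ¬ mmSpanning ends EM Vext γ ∧
              ((EM \ γ ⊆ η) ∧ ∀ v ∈ Vext, ∀ w ∈ Vext,
                Relation.EqvGen (step (qends ends γ) η) (qmk ends γ v) (qmk ends γ w))
            then 1 else 0)) := by
  constructor
  · intro η hη
    have himp : mmSpanning ends EM Vext η → mmSpanning ends EM Vext γ := by
      rintro ⟨h1, h2⟩
      exact ⟨h1.trans hη, fun v hv w hw => reach_mono hη (h2 v hv w hw)⟩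
    by_cases h : mmSpanning ends EM Vext η
    · simp [sG, h, himp h]
    · simp [sG, h]
  · intro η hη
    have hdisj : Disjoint γ η := by
      rw [Finset.disjoint_right]
      intro e he
      exact (Finset.mem_sdiff.1 (hη he)).2
    have hcardu : (γ ∪ η).card = γ.card + η.card := Finset.card_union_of_disjoint hdisj
    have hrank := grank_union ends γ η
    have hAB : mmSpanning ends EM Vext γ → mmSpanning ends EM Vext (γ ∪ η) := by
      rintro ⟨h1, h2⟩
      exact ⟨h1.trans Finset.subset_union_left,
        fun v hv w hw => reach_mono Finset.subset_union_left (h2 v hv w hw)⟩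
    have hBC : mmSpanning ends EM Vext (γ ∪ η) ↔
        ((EM \ γ ⊆ η) ∧ ∀ v ∈ Vext, ∀ w ∈ Vext,
          Relation.EqvGen (step (qends ends γ) η) (qmk ends γ v) (qmk ends γ w)) := by
      constructor
      · rintro ⟨h1, h2⟩
        refine ⟨?_, fun v hv w hw => reach_to_quot (h2 v hv w hw)⟩
        intro e he
        rw [Finset.mem_sdiff] at he
        rcases Finset.mem_union.1 (h1 he.1) with h | h
        · exact absurd h he.2
        · exact h
      · rintro ⟨h1, h2⟩
        refine ⟨?_, fun v hv w hw => quot_to_reach (h2 v hv w hw) v w rfl rfl⟩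
        intro e he
        by_cases hg : e ∈ γ
        · exact Finset.mem_union_left _ hg
        · exact Finset.mem_union_right _ (h1 (Finset.mem_sdiff.2 ⟨he, hg⟩))
    simp only [sG, cycleRank]
    by_cases hA : mmSpanning ends EM Vext γ
    · rw [if_pos hA, if_pos (hAB hA), if_neg (fun h => h.1 hA), hcardu, hrank]
      push_cast
      ring
    · by_cases hB : mmSpanning ends EM Vext (γ ∪ η)
      · rw [if_pos hB, if_neg hA, if_pos ⟨hA, hBC.1 hB⟩, hcardu, hrank]
        push_cast
        ring
      · rw [if_neg hB, if_neg hA, if_neg (fun h => hB (hBC.2 h.2)), hcardu, hrank]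
        push_cast
        ring
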